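/- Let A be a unital C*-algebra and H a complex Hilbert space. Then the set of C*-extreme points of the C*-convex set CCP^×(A,B(H)) of contractive CP maps Φ : A → B(H) with Φ(1) invertible equals the set of C*-extreme points of UCP(A,B(H)). -/

import Mathlib

open scoped ComplexOrder

noncomputable section

section Defs

variable {A H : Type*}
variable [NormedAddCommGroup H] [InnerProductSpace ℂ H]

/-- An operator on a complex inner product space is positive:
`0 ≤ ⟪x, T x⟫` for all `x`. -/
def IsPosOp (T : H →L[ℂ] H) : Prop := ∀ x : H, 0 ≤ (inner ℂ x (T x) : ℂ)

variable [Ring A] [StarRing A] [Algebra ℂ A]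

/-- Complete positivity of a linear map `Φ : A → B(H)`:
`∑_{i,j} ⟪h i, Φ(a i* a j) (h j)⟫ ≥ 0` for all finite families. -/
def IsCPMap (Φ : A →ₗ[ℂ] (H →L[ℂ] H)) : Prop :=
  ∀ (n : ℕ) (a : Fin n → A) (h : Fin n → H),
    0 ≤ ∑ i, ∑ j, (inner ℂ (h i) ((Φ (star (a i) * a j)) (h j)) : ℂ)

/-- `CP^{(P)}(A, B(H))`: the CP maps `Φ` with `Φ 1 = P`. -/
def CPP (P : H →L[ℂ] H) : Set (A →ₗ[ℂ] (H →L[ℂ] H)) := {Φ | IsCPMap Φ ∧ Φ 1 = P}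

/-- `CCP(A, B(H))`: the contractive CP maps, i.e. CP maps with `Φ 1 ≤ 1`. -/
def CCPmaps : Set (A →ₗ[ℂ] (H →L[ℂ] H)) := {Φ | IsCPMap Φ ∧ IsPosOp (1 - Φ 1)}

variable [CompleteSpace H]

/-- `Ad_T : X ↦ T* X T`, as a linear map on `B(H)`. -/
def conjAd (T : H →L[ℂ] H) : (H →L[ℂ] H) →ₗ[ℂ] (H →L[ℂ] H) where
  toFun X := star T * X * T
  map_add' X Y := by simp [add_mul, mul_add]
  map_smul' c X := by simp [mul_smul_comm, smul_mul_assoc]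

/-- `Φ ∈ CP^{(P)}` is a `P`-`C*`-extreme point of `CP^{(P)}(A, B(H))`:
whenever `Φ = ∑ Ad_{T j} ∘ Φs j` is a proper `P`-`C*`-convex combination of members of
`CP^{(P)}`, each `Φs j` equals `Ad_{S j} ∘ Φ` for some invertible `S j`. -/
def IsPCExtreme (P : H →L[ℂ] H) (Φ : A →ₗ[ℂ] (H →L[ℂ] H)) : Prop :=
  Φ ∈ CPP (A := A) P ∧
  ∀ (n : ℕ) (T : Fin n → (H →L[ℂ] H)) (Φs : Fin n → (A →ₗ[ℂ] (H →L[ℂ] H))),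
    (∀ j, IsUnit (T j)) → (∀ j, Φs j ∈ CPP (A := A) P) →
    (∑ j, star (T j) * P * T j) = P →
    Φ = ∑ j, (conjAd (T j)).comp (Φs j) →
    ∀ j, ∃ S : H →L[ℂ] H, IsUnit S ∧ Φs j = (conjAd S).comp Φ

/-- `Φ ∈ C` is a `C*`-extreme point of the `C*`-convex set `C`:
whenever `Φ = ∑ Ad_{T j} ∘ Φs j` is a proper `C*`-convex combination of members of `C`,
each `Φs j` is unitarily equivalent to `Φ`. -/
def IsCstarExtreme (C : Set (A →ₗ[ℂ] (H →L[ℂ] H))) (Φ : A →ₗ[ℂ] (H →L[ℂ] H)) : Prop :=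
  Φ ∈ C ∧
  ∀ (n : ℕ) (T : Fin n → (H →L[ℂ] H)) (Φs : Fin n → (A →ₗ[ℂ] (H →L[ℂ] H))),
    (∀ j, IsUnit (T j)) → (∀ j, Φs j ∈ C) →
    (∑ j, star (T j) * T j) = 1 →
    Φ = ∑ j, (conjAd (T j)).comp (Φs j) →
    ∀ j, ∃ U : H →L[ℂ] H, U ∈ unitary (H →L[ℂ] H) ∧ Φs j = (conjAd U).comp Φ

/-- `Φ ∈ C` is a linear extreme point of the convex set `C`. -/
def IsLinExtreme (C : Set (A →ₗ[ℂ] (H →L[ℂ] H))) (Φ : A →ₗ[ℂ] (H →L[ℂ] H)) : Prop :=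
  Φ ∈ C ∧
  ∀ (n : ℕ) (t : Fin n → ℝ) (Φs : Fin n → (A →ₗ[ℂ] (H →L[ℂ] H))),
    (∀ j, 0 < t j ∧ t j < 1) → (∀ j, Φs j ∈ C) → (∑ j, t j) = 1 →
    Φ = ∑ j, (t j : ℂ) • Φs j →
    ∀ j, Φs j = Φ

end Defs

/-! ### Auxiliary lemmas -/

section Aux

set_option synthInstance.maxHeartbeats 400000
set_option maxHeartbeats 1600000

variable {A H : Type*}
variable [NormedAddCommGroup H] [InnerProductSpace ℂ H]

lemma isPosOp_zero' : IsPosOp (0 : H →L[ℂ] H) := fun x => by simp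

lemma isPosOp_one' : IsPosOp (1 : H →L[ℂ] H) := fun x => by
  simp only [ContinuousLinearMap.one_apply]
  rw [inner_self_eq_norm_sq_to_K]
  positivity

lemma isPosOp_add' {S T : H →L[ℂ] H} (hS : IsPosOp S) (hT : IsPosOp T) : IsPosOp (S + T) :=
  fun x => by simpa [inner_add_right] using add_nonneg (hS x) (hT x)

lemma isPosOp_smul' {c : ℝ} (hc : 0 ≤ c) {T : H →L[ℂ] H} (hT : IsPosOp T) :
    IsPosOp ((c : ℂ) • T) := fun x => by
  simp only [ContinuousLinearMap.smul_apply]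
  rw [inner_smul_right]
  exact mul_nonneg (by exact_mod_cast hc) (hT x)

lemma opEqZero_of_forall_inner {T : H →L[ℂ] H}
    (h : ∀ x, (inner ℂ x (T x) : ℂ) = 0) : T = 0 := by
  have h' : ∀ x, (inner ℂ (T.toLinearMap x) x : ℂ) = 0 := fun x => by
    rw [← inner_conj_symm, show ((T.toLinearMap) x) = T x from rfl, h x, map_zero]
  have := (inner_map_self_eq_zero T.toLinearMap).mp h'
  ext x
  exact congrFun (congrArg (fun f => f.toFun) this) x

variable [CompleteSpace H]

lemma isPosOp_conj' {Q : H →L[ℂ] H} (hQ : IsPosOp Q) (V : H →L[ℂ] H) :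
    IsPosOp (star V * Q * V) := fun x => by
  have : (star V * Q * V) x = star V (Q (V x)) := rfl
  rw [this, ContinuousLinearMap.star_eq_adjoint, ContinuousLinearMap.adjoint_inner_right]
  exact hQ (V x)

lemma isPosOp_nonneg' {T : H →L[ℂ] H} (hT : IsPosOp T) : 0 ≤ T := by
  rw [ContinuousLinearMap.nonneg_iff_isPositive, ContinuousLinearMap.isPositive_iff_complex]
  intro x
  have h := hT x
  obtain ⟨hre, him⟩ := Complex.le_def.mp h
  simp only [Complex.zero_re, Complex.zero_im] at hre him
  have hc : (inner ℂ (T x) x : ℂ) = inner ℂ x (T x) := by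
    rw [← inner_conj_symm]
    exact Complex.conj_eq_iff_im.mpr him.symm
  constructor
  · rw [hc]
    simp only [RCLike.re_to_complex]
    exact Complex.ext (by simp) (by simp [← him])
  · rw [hc]
    simpa [RCLike.re_to_complex] using hre

omit [CompleteSpace H] in
lemma isPosOp_sum_zero' {n : ℕ} {Q : Fin n → (H →L[ℂ] H)} (hpos : ∀ j, IsPosOp (Q j))
    (hsum : ∑ j, Q j = 0) : ∀ j, Q j = 0 := by
  intro j
  apply opEqZero_of_forall_inner
  intro x
  have h0 : ∑ i, (inner ℂ x ((Q i) x) : ℂ) = 0 := by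
    rw [← inner_sum, ← ContinuousLinearMap.sum_apply, hsum]
    simp
  exact (Finset.sum_eq_zero_iff_of_nonneg (fun i _ => hpos i x)).mp h0 j (Finset.mem_univ j)

lemma isUnit_of_mul_self' {M : Type*} [Monoid M] {a : M} (h : IsUnit (a * a)) : IsUnit a := by
  obtain ⟨u, hu⟩ := h
  have comm : Commute a (↑u) := by rw [hu]; exact (Commute.refl a).mul_right (Commute.refl a)
  have comminv : Commute a ↑u⁻¹ := comm.units_inv_right
  refine ⟨⟨a, a * ↑u⁻¹, ?_, ?_⟩, rfl⟩
  · rw [← mul_assoc, ← hu, Units.mul_inv]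
  · rw [mul_assoc, comminv.symm.eq, ← mul_assoc, ← hu, Units.mul_inv]

lemma isUnit_csmul' {B : Type*} [Ring B] [Algebra ℂ B] {c : ℂ} (hc : c ≠ 0) {X : B}
    (hX : IsUnit X) : IsUnit (c • X) := by
  obtain ⟨u, rfl⟩ := hX
  refine ⟨⟨c • ↑u, c⁻¹ • ↑u⁻¹, ?_, ?_⟩, rfl⟩
  · rw [smul_mul_smul_comm, mul_inv_cancel₀ hc, Units.mul_inv, one_smul]
  · rw [smul_mul_smul_comm, inv_mul_cancel₀ hc, Units.inv_mul, one_smul]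

lemma sandwich {B : Type*} [Ring B] {u v X : B} (huv : u * v = 1) (hvu : v * u = 1) :
    u * (v * X * v) * u = X := by
  simp only [← mul_assoc]
  rw [huv, one_mul, mul_assoc, hvu, mul_one]

lemma sandwich' {B : Type*} [Ring B] {u v X : B} (huv : u * v = 1) :
    u * (v * X * u) * v = X := by
  simp only [← mul_assoc]
  rw [huv, one_mul, mul_assoc, huv, mul_one]

lemma eq_zero_of_conj_eq_zero' {B : Type*} [Ring B] [StarRing B] {T X : B} (hT : IsUnit T)
    (h : star T * X * T = 0) : X = 0 := by
  obtain ⟨u, rfl⟩ := hT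
  have h2 := congrArg (fun Y => (star ((↑u⁻¹ : B))) * Y * (↑u⁻¹ : B)) h
  simp only [mul_zero, zero_mul] at h2
  rwa [show star ((↑u⁻¹ : B)) * (star (↑u : B) * X * ↑u) * ↑u⁻¹
      = star ((↑u:B) * ↑u⁻¹) * X * ((↑u:B) * ↑u⁻¹) from by
        rw [star_mul]; simp only [mul_assoc], Units.mul_inv, star_one, one_mul, mul_one] at h2

variable [Ring A] [StarRing A] [Algebra ℂ A]

lemma conjAd_apply' (T X : H →L[ℂ] H) : conjAd T X = star T * X * T := rfl

lemma isCPMap_conj' {Φ : A →ₗ[ℂ] (H →L[ℂ] H)} (hΦ : IsCPMap Φ) (V : H →L[ℂ] H) :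
    IsCPMap ((conjAd V).comp Φ) := by
  intro n a h
  have key : ∀ (i j : Fin n), (inner ℂ (h i) ((((conjAd V).comp Φ) (star (a i) * a j)) (h j)) : ℂ)
      = inner ℂ (V (h i)) ((Φ (star (a i) * a j)) (V (h j))) := by
    intro i j
    have : (((conjAd V).comp Φ) (star (a i) * a j)) (h j)
        = star V ((Φ (star (a i) * a j)) (V (h j))) := rfl
    rw [this, ContinuousLinearMap.star_eq_adjoint, ContinuousLinearMap.adjoint_inner_right]
  simp only [key]
  exact hΦ n a (fun i => V (h i))

omit [CompleteSpace H] in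
lemma isCPMap_smul' {c : ℝ} (hc : 0 ≤ c) {Φ : A →ₗ[ℂ] (H →L[ℂ] H)} (hΦ : IsCPMap Φ) :
    IsCPMap ((c : ℂ) • Φ) := by
  intro n a h
  have key : ∀ (i j : Fin n), (inner ℂ (h i) ((((c:ℂ) • Φ) (star (a i) * a j)) (h j)) : ℂ)
      = (c:ℂ) * inner ℂ (h i) ((Φ (star (a i) * a j)) (h j)) := by
    intro i j
    simp only [LinearMap.smul_apply, ContinuousLinearMap.smul_apply]
    rw [inner_smul_right]
  simp only [key, ← Finset.mul_sum]
  exact mul_nonneg (by exact_mod_cast hc) (hΦ n a h)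

/-- Key step: a `C*`-extreme point of `CCP^×(A,B(H))` is unital. -/
lemma unital_of_cstarExtreme {Φ : A →ₗ[ℂ] (H →L[ℂ] H)}
    (h : IsCstarExtreme
      {Ψ : A →ₗ[ℂ] (H →L[ℂ] H) | IsCPMap Ψ ∧ IsPosOp (1 - Ψ 1) ∧ IsUnit (Ψ 1)} Φ) :
    Φ 1 = 1 := by
  obtain ⟨⟨hCP, hpos, hunit⟩, hext⟩ := h
  -- `Φ 1` is a positive operator
  have hPposOp : IsPosOp (Φ 1) := by
    intro x
    have h1 := hCP 1 (fun _ => 1) (fun _ => x)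
    simpa using h1
  have hP0 : (0 : H →L[ℂ] H) ≤ Φ 1 := isPosOp_nonneg' hPposOp
  have hP1 : Φ 1 ≤ 1 := sub_nonneg.mp (isPosOp_nonneg' hpos)
  -- square root of `Φ 1` and its inverse
  have hSS : CFC.sqrt (Φ 1) * CFC.sqrt (Φ 1) = Φ 1 := CFC.sqrt_mul_sqrt_self (Φ 1) hP0
  set S := CFC.sqrt (Φ 1) with hSdef
  have hS0 : (0 : H →L[ℂ] H) ≤ S := CFC.sqrt_nonneg _
  have hSsa : star S = S := (IsSelfAdjoint.of_nonneg hS0).star_eq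
  have hSU : IsUnit S := isUnit_of_mul_self' (hSS ▸ hunit)
  set Si := Ring.inverse S with hSidef
  have hSSi : S * Si = 1 := Ring.mul_inverse_cancel S hSU
  have hSiS : Si * S = 1 := Ring.inverse_mul_cancel S hSU
  have hSisa : star Si = Si := by rw [hSidef, ← Ring.inverse_star, hSsa]
  -- the operator `R = 1 - (1/2) Φ 1`, positive and invertible
  have hnormP : ‖Φ 1‖ ≤ 1 := (CStarAlgebra.norm_le_one_iff_of_nonneg (Φ 1) hP0).mpr hP1
  have hnorm : ‖(2⁻¹ : ℂ) • Φ 1‖ < 1 := by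
    rw [norm_smul]
    have hc : ‖(2⁻¹ : ℂ)‖ = 2⁻¹ := by simp
    rw [hc]
    nlinarith [norm_nonneg (Φ 1)]
  have hRunit : IsUnit ((1 : H →L[ℂ] H) - (2⁻¹ : ℂ) • Φ 1) := (Units.oneSub _ hnorm).isUnit
  have hRpos : IsPosOp ((1 : H →L[ℂ] H) - (2⁻¹ : ℂ) • Φ 1) := by
    have h2 : (1 : H →L[ℂ] H) - (2⁻¹ : ℂ) • Φ 1
        = ((2⁻¹:ℝ):ℂ) • ((1 : H →L[ℂ] H) - Φ 1) + ((2⁻¹:ℝ):ℂ) • (1 : H →L[ℂ] H) := by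
      push_cast
      module
    rw [h2]
    exact isPosOp_add' (isPosOp_smul' (by norm_num) hpos) (isPosOp_smul' (by norm_num) isPosOp_one')
  have hR0 : (0 : H →L[ℂ] H) ≤ 1 - (2⁻¹ : ℂ) • Φ 1 := isPosOp_nonneg' hRpos
  have hWW : CFC.sqrt ((1 : H →L[ℂ] H) - (2⁻¹ : ℂ) • Φ 1) *
      CFC.sqrt ((1 : H →L[ℂ] H) - (2⁻¹ : ℂ) • Φ 1) = 1 - (2⁻¹ : ℂ) • Φ 1 :=
    CFC.sqrt_mul_sqrt_self _ hR0
  set W := CFC.sqrt ((1 : H →L[ℂ] H) - (2⁻¹ : ℂ) • Φ 1) with hWdef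
  have hW0 : (0 : H →L[ℂ] H) ≤ W := CFC.sqrt_nonneg _
  have hWsa : star W = W := (IsSelfAdjoint.of_nonneg hW0).star_eq
  have hWU : IsUnit W := isUnit_of_mul_self' (hWW ▸ hRunit)
  set Wi := Ring.inverse W with hWidef
  have hWWi : W * Wi = 1 := Ring.mul_inverse_cancel W hWU
  have hWiW : Wi * W = 1 := Ring.inverse_mul_cancel W hWU
  have hWisa : star Wi = Wi := by rw [hWidef, ← Ring.inverse_star, hWsa]
  have hWiU : IsUnit Wi := by
    obtain ⟨u, hu⟩ := hWU
    rw [hWidef, ← hu, Ring.inverse_unit]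
    exact u⁻¹.isUnit
  -- the scalar `c = 1/√2`
  set c : ℝ := (Real.sqrt 2)⁻¹ with hcdef
  have hc2 : (c : ℂ) * (c : ℂ) = (2⁻¹ : ℂ) := by
    have hcc : c * c = 2⁻¹ := by
      rw [hcdef, ← mul_inv, Real.mul_self_sqrt (by norm_num : (0:ℝ) ≤ 2)]
    calc (c : ℂ) * (c : ℂ) = ((c * c : ℝ) : ℂ) := by push_cast; ring
      _ = (2⁻¹ : ℂ) := by rw [hcc]; norm_num
  have hstarc : star (c : ℂ) = (c : ℂ) := by
    rw [Complex.star_def, Complex.conj_ofReal]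
  have hcne : (c : ℂ) ≠ 0 := by
    rw [hcdef]
    push_cast
    simp [Real.sqrt_eq_zero']
  -- the `C*`-convex decomposition
  have hΦ11 : Si * Φ 1 * Si = 1 := by
    rw [← hSS]
    simp only [← mul_assoc]
    rw [hSiS, one_mul, hSSi]
  have hval1 : (((conjAd Si).comp Φ) : A →ₗ[ℂ] (H →L[ℂ] H)) 1 = 1 := by
    show star Si * Φ 1 * Si = 1
    rw [hSisa]
    exact hΦ11
  -- value of second component at 1 and its positivity
  have hWi1 : Wi * ((1 : H →L[ℂ] H) - (2⁻¹ : ℂ) • Φ 1) * Wi = 1 := by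
    rw [← hWW]
    simp only [← mul_assoc]
    rw [hWiW, one_mul, hWWi]
  have hexp : Wi * Wi - (2⁻¹ : ℂ) • (Wi * Φ 1 * Wi) = 1 := by
    rw [← hWi1]
    simp only [mul_sub, sub_mul, mul_one, one_mul, mul_smul_comm, smul_mul_assoc]
  have hkey2 : (1 : H →L[ℂ] H) - (2⁻¹ : ℂ) • (Wi * Φ 1 * Wi) = Wi * (1 - Φ 1) * Wi := by
    have hrhs : Wi * ((1 : H →L[ℂ] H) - Φ 1) * Wi = Wi * Wi - Wi * Φ 1 * Wi := by
      simp only [mul_sub, sub_mul, mul_one, one_mul]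
    rw [hrhs, ← hexp]
    module
  have hval2 : (((2⁻¹ : ℂ) • ((conjAd Wi).comp Φ)) : A →ₗ[ℂ] (H →L[ℂ] H)) 1
      = (2⁻¹ : ℂ) • (Wi * Φ 1 * Wi) := by
    show (2⁻¹ : ℂ) • (star Wi * Φ 1 * Wi) = (2⁻¹ : ℂ) • (Wi * Φ 1 * Wi)
    rw [hWisa]
  have hmem0 : (conjAd Si).comp Φ ∈
      {Ψ : A →ₗ[ℂ] (H →L[ℂ] H) | IsCPMap Ψ ∧ IsPosOp (1 - Ψ 1) ∧ IsUnit (Ψ 1)} := by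
    refine ⟨isCPMap_conj' hCP Si, ?_, ?_⟩
    · rw [hval1, sub_self]; exact isPosOp_zero'
    · rw [hval1]; exact isUnit_one
  have hmem1 : (2⁻¹ : ℂ) • ((conjAd Wi).comp Φ) ∈
      {Ψ : A →ₗ[ℂ] (H →L[ℂ] H) | IsCPMap Ψ ∧ IsPosOp (1 - Ψ 1) ∧ IsUnit (Ψ 1)} := by
    refine ⟨?_, ?_, ?_⟩
    · have hhalf : ((2⁻¹:ℝ):ℂ) = (2⁻¹:ℂ) := by norm_num
      rw [← hhalf]
      exact isCPMap_smul' (by norm_num) (isCPMap_conj' hCP Wi)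
    · rw [hval2, hkey2]
      have hconj := isPosOp_conj' hpos Wi
      rwa [hWisa] at hconj
    · rw [hval2]
      exact isUnit_csmul' (by norm_num) ((hWiU.mul hunit).mul hWiU)
  have hT0 : IsUnit ((c : ℂ) • S) := isUnit_csmul' hcne hSU
  obtain ⟨U, hUmem, hU0⟩ := hext 2
    ![(c : ℂ) • S, W]
    ![(conjAd Si).comp Φ, (2⁻¹ : ℂ) • ((conjAd Wi).comp Φ)]
    (by
      intro j
      fin_cases j
      · exact hT0
      · exact hWU)
    (by
      intro j
      fin_cases j
      · exact hmem0
      · exact hmem1)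
    (by
      rw [Fin.sum_univ_two]
      simp only [Matrix.cons_val_zero, Matrix.cons_val_one, Matrix.head_cons]
      rw [star_smul, hstarc, hSsa, hWsa, smul_mul_smul_comm, hc2, hSS, hWW]
      abel)
    (by
      apply LinearMap.ext
      intro a
      rw [Fin.sum_univ_two, LinearMap.add_apply]
      simp only [Matrix.cons_val_zero, Matrix.cons_val_one, Matrix.head_cons,
        LinearMap.comp_apply, LinearMap.smul_apply, conjAd_apply']
      rw [hSisa, hWisa, star_smul, hstarc, hSsa, hWsa]
      simp only [smul_mul_assoc, mul_smul_comm, smul_smul]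
      rw [hc2, sandwich hSSi hSiS, sandwich hWWi hWiW]
      module)
    0
  -- extract unitarity and conclude
  have h1 : (1 : H →L[ℂ] H) = star U * Φ 1 * U := by
    have h2 := congrArg (fun Ψ : A →ₗ[ℂ] (H →L[ℂ] H) => Ψ 1) hU0
    simp only [Matrix.cons_val_zero] at h2
    calc (1 : H →L[ℂ] H) = ((conjAd Si).comp Φ) 1 := hval1.symm
      _ = ((conjAd U).comp Φ) 1 := h2
      _ = star U * Φ 1 * U := rfl
  obtain ⟨hU1, hU2⟩ := Unitary.mem_iff.mp hUmem
  calc Φ 1 = U * (star U * Φ 1 * U) * star U := (sandwich' hU2).symm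
    _ = U * 1 * star U := by rw [← h1]
    _ = 1 := by rw [mul_one, hU2]

end Aux

set_option synthInstance.maxHeartbeats 400000 in
set_option maxHeartbeats 1600000 in
/-- Proposition `prop-CCP-prime=UCP-ext`. The `C*`-extreme points of
`CCP^×(A,B(H))` (contractive CP maps with invertible `Φ(1)`) are exactly the `C*`-extreme
points of `UCP(A,B(H))`. -/
theorem stmt15 {A : Type*} [NormedRing A] [StarRing A] [CStarRing A] [NormedAlgebra ℂ A] [StarModule ℂ A] [CompleteSpace A]
    {H : Type*} [NormedAddCommGroup H] [InnerProductSpace ℂ H] [CompleteSpace H] :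
    {Φ : A →ₗ[ℂ] (H →L[ℂ] H) |
        IsCstarExtreme
          {Ψ : A →ₗ[ℂ] (H →L[ℂ] H) | IsCPMap Ψ ∧ IsPosOp (1 - Ψ 1) ∧ IsUnit (Ψ 1)} Φ} =
      {Φ : A →ₗ[ℂ] (H →L[ℂ] H) |
        IsCstarExtreme (CPP (A := A) (1 : H →L[ℂ] H)) Φ} := by
  ext Φ
  simp only [Set.mem_setOf_eq]
  constructor
  · intro h
    have hP1 : Φ 1 = 1 := unital_of_cstarExtreme h
    obtain ⟨⟨hCP, hpos, hunit⟩, hext⟩ := h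
    refine ⟨⟨hCP, hP1⟩, ?_⟩
    intro n T Φs hT hmem hsum heq
    refine hext n T Φs hT (fun j => ?_) hsum heq
    obtain ⟨hj1, hj2⟩ := hmem j
    exact ⟨hj1, by rw [hj2, sub_self]; exact isPosOp_zero', by rw [hj2]; exact isUnit_one⟩
  · rintro ⟨⟨hCP, hP1⟩, hext⟩
    refine ⟨⟨hCP, by rw [hP1, sub_self]; exact isPosOp_zero', by rw [hP1]; exact isUnit_one⟩, ?_⟩
    intro n T Φs hT hmem hsum heq
    -- each `Φs j` is in fact unital
    have key : ∀ j, Φs j 1 = 1 := by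
      have hdecomp : (1 : H →L[ℂ] H) = ∑ j, star (T j) * (Φs j 1) * T j := by
        have h2 := congrArg (fun Ψ : A →ₗ[ℂ] (H →L[ℂ] H) => Ψ 1) heq
        simp only [LinearMap.sum_apply, LinearMap.comp_apply, conjAd_apply'] at h2
        rw [hP1] at h2
        exact h2
      have hsum0 : ∑ j, (star (T j) * ((1 : H →L[ℂ] H) - Φs j 1) * T j) = 0 := by
        have hexpand : ∀ j, star (T j) * ((1 : H →L[ℂ] H) - Φs j 1) * T j
            = star (T j) * T j - star (T j) * (Φs j 1) * T j := by
          intro j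
          simp only [mul_sub, sub_mul, mul_one, one_mul]
        simp only [hexpand]
        rw [Finset.sum_sub_distrib, hsum, ← hdecomp, sub_self]
      have hzero := isPosOp_sum_zero'
        (fun j => isPosOp_conj' (hmem j).2.1 (T j)) hsum0
      intro j
      have hz := eq_zero_of_conj_eq_zero' (hT j) (hzero j)
      exact (sub_eq_zero.mp hz).symm
    refine hext n T Φs hT (fun j => ⟨(hmem j).1, key j⟩) hsum heq

end
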